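/- There exists a compactly supported Lipschitz function φ : ℝ² → ℝ such that for every 1 ≤ p < ∞ the composition operator Φ(u) = φ∘u from W^{1,p}([0,1], ℝ²) to W^{1,p}([0,1]) is not continuous: there are curves u_i → u in W^{1,p}([0,1], ℝ²) with Φ(u_i) not converging to Φ(u) in W^{1,p}. -/

import Mathlib

open Set MeasureTheory Filter

section Stmt5Aux

open Metric

noncomputable section

/-- mesh size of strip `j` -/
private def hh (j : ℕ) : ℝ := (1/2 : ℝ) ^ j
/-- left edge of strip `j` -/
private def aa (j : ℕ) : ℝ := 2 - 2 * hh j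
/-- midline of strip `j` -/
private def mm (j : ℕ) : ℝ := 2 - (3/2) * hh j

private lemma hh_pos (j : ℕ) : 0 < hh j := by unfold hh; positivity
private lemma hh_le_one (j : ℕ) : hh j ≤ 1 := by
  unfold hh; exact pow_le_one₀ (by norm_num) (by norm_num)
private lemma hh_succ (j : ℕ) : hh (j+1) = hh j / 2 := by
  simp [hh, pow_succ]; ring
private lemma hh_antitone : Antitone hh := fun j k hjk => by
  exact pow_le_pow_of_le_one (by norm_num) (by norm_num) hjk
private lemma aa_mono : Monotone aa := fun j k hjk => by
  have := hh_antitone hjk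
  simp only [aa]; linarith
private lemma aa_le_mm (j : ℕ) : aa j + hh j / 2 = mm j := by
  simp [aa, mm]; ring
private lemma mm_le_aa (j : ℕ) : mm j + hh j / 2 = aa (j+1) := by
  simp [mm, aa, hh_succ]; ring

private def pt (x y : ℝ) : EuclideanSpace ℝ (Fin 2) := WithLp.toLp 2 ![x, y]

/-- the comb set -/
private def KK : Set (EuclideanSpace ℝ (Fin 2)) :=
  {z | 50 ≤ |z 0| ∨ 50 ≤ |z 1| ∨ z 0 = 2 ∨
    ∃ (j : ℕ) (k : ℤ), aa j ≤ z 0 ∧ z 0 ≤ aa (j+1) ∧ z 1 = (k : ℝ) * hh j}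

private def φ₀ (z : EuclideanSpace ℝ (Fin 2)) : ℝ := infDist z KK

private def ee : EuclideanSpace ℝ (Fin 2) := pt 0 1
private def uu (i : ℕ) (t : ℝ) : EuclideanSpace ℝ (Fin 2) := pt (mm i) 0 + t • ee
private def vv (t : ℝ) : EuclideanSpace ℝ (Fin 2) := pt 2 0 + t • ee

private lemma uu_eq (i : ℕ) (t : ℝ) : uu i t = pt (mm i) t := by
  ext x
  fin_cases x <;> simp [uu, pt, ee]

private lemma vv_eq (t : ℝ) : vv t = pt 2 t := by
  ext x
  fin_cases x <;> simp [vv, pt, ee]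

private lemma dist_pt_pt (a b c d : ℝ) :
    dist (pt a b) (pt c d) = Real.sqrt ((a-c)^2 + (b-d)^2) := by
  rw [EuclideanSpace.dist_eq, Fin.sum_univ_two]
  simp [pt, Real.dist_eq, sq_abs]

private lemma norm_pt (a b : ℝ) : ‖pt a b‖ = Real.sqrt (a^2 + b^2) := by
  rw [EuclideanSpace.norm_eq, Fin.sum_univ_two]
  simp [pt, sq_abs]

private lemma abs0_le_dist (z w : EuclideanSpace ℝ (Fin 2)) : |z 0 - w 0| ≤ dist z w := by
  rw [EuclideanSpace.dist_eq, Fin.sum_univ_two, Real.dist_eq, Real.dist_eq, sq_abs, sq_abs,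
    ← Real.sqrt_sq_eq_abs]
  apply Real.sqrt_le_sqrt
  nlinarith [sq_nonneg (z 1 - w 1)]

private lemma abs1_le_dist (z w : EuclideanSpace ℝ (Fin 2)) : |z 1 - w 1| ≤ dist z w := by
  rw [EuclideanSpace.dist_eq, Fin.sum_univ_two, Real.dist_eq, Real.dist_eq, sq_abs, sq_abs,
    ← Real.sqrt_sq_eq_abs]
  apply Real.sqrt_le_sqrt
  nlinarith [sq_nonneg (z 0 - w 0)]

/-- the sawtooth function -/
private def saw (i : ℕ) (t : ℝ) : ℝ := |t - round (t / hh i) * hh i|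

private lemma saw_eq (i : ℕ) (t : ℝ) (k : ℤ) :
    |t - k * hh i| = hh i * |t / hh i - k| := by
  have h0 := (hh_pos i).ne'
  have : t - k * hh i = hh i * (t / hh i - k) := by field_simp
  rw [this, abs_mul, abs_of_pos (hh_pos i)]


private lemma saw_le (i : ℕ) (t : ℝ) : saw i t ≤ hh i / 2 := by
  rw [saw, saw_eq]
  have h1 : |t / hh i - round (t / hh i)| ≤ 1/2 := abs_sub_round _
  have h2 := hh_pos i
  nlinarith

private lemma saw_le_tooth (i : ℕ) (t : ℝ) (k : ℤ) : saw i t ≤ |t - k * hh i| := by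
  rw [saw, saw_eq, saw_eq]
  exact mul_le_mul_of_nonneg_left (round_le _ k) (hh_pos i).le

private lemma mm_mem (i : ℕ) : mm i ∈ Icc (1/2 : ℝ) 2 := by
  have h1 := hh_pos i
  have h2 := hh_le_one i
  constructor <;> simp [mm] <;> nlinarith

/-- The value of `φ₀` along the curve `uu i`. -/
private lemma phi_uu (i : ℕ) {t : ℝ} (ht : t ∈ Icc (0:ℝ) 1) : φ₀ (uu i t) = saw i t := by
  have hmem : pt (mm i) (round (t / hh i) * hh i) ∈ KK := by
    refine Or.inr (Or.inr (Or.inr ⟨i, round (t / hh i), ?_, ?_, rfl⟩))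
    · show aa i ≤ mm i
      have := hh_pos i; linarith [aa_le_mm i]
    · show mm i ≤ aa (i+1)
      have := hh_pos i; linarith [mm_le_aa i]
  apply le_antisymm
  · calc φ₀ (uu i t) ≤ dist (uu i t) (pt (mm i) (round (t / hh i) * hh i)) :=
          infDist_le_dist_of_mem hmem
      _ = saw i t := by
          rw [uu_eq, dist_pt_pt]
          simp [saw, Real.sqrt_sq_eq_abs]
  · -- lower bound
    refine le_of_not_gt fun hlt => ?_
    obtain ⟨q, hq, hdq⟩ := (infDist_lt_iff ⟨_, hmem⟩).1 hlt
    refine absurd hdq (not_lt.2 ?_)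
    have hst := saw_le i t
    have h2 := hh_pos i
    have h3 := hh_le_one i
    have hu0 : uu i t 0 = mm i := by rw [uu_eq]; rfl
    have hu1 : uu i t 1 = t := by rw [uu_eq]; rfl
    have hmm := mm_mem i
    rcases hq with h50 | h50 | h2q | ⟨j, k, hj1, hj2, hj3⟩
    · -- |q 0| ≥ 50
      refine le_trans ?_ (abs0_le_dist (uu i t) q)
      rw [hu0]
      rcases le_abs.1 h50 with hc | hc
      · rw [abs_sub_comm]; calc saw i t ≤ hh i / 2 := hst
          _ ≤ |q 0 - mm i| := by rw [le_abs]; left; linarith [hmm.2]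
      · calc saw i t ≤ hh i / 2 := hst
          _ ≤ |mm i - q 0| := by rw [le_abs]; left; linarith [hmm.1]
    · -- |q 1| ≥ 50
      refine le_trans ?_ (abs1_le_dist (uu i t) q)
      rw [hu1]
      rcases le_abs.1 h50 with hc | hc
      · rw [abs_sub_comm]; calc saw i t ≤ hh i / 2 := hst
          _ ≤ |q 1 - t| := by rw [le_abs]; left; linarith [ht.2]
      · calc saw i t ≤ hh i / 2 := hst
          _ ≤ |t - q 1| := by rw [le_abs]; left; linarith [ht.1]
    · -- q 0 = 2
      refine le_trans ?_ (abs0_le_dist (uu i t) q)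
      rw [hu0, h2q, abs_sub_comm]
      calc saw i t ≤ hh i / 2 := hst
        _ ≤ |2 - mm i| := by rw [le_abs]; left; simp [mm]; linarith
    · -- tooth (j, k)
      rcases lt_trichotomy j i with hji | hji | hji
      · -- j < i : q 0 ≤ aa (j+1) ≤ aa i = mm i - hh i / 2
        refine le_trans ?_ (abs0_le_dist (uu i t) q)
        rw [hu0]
        have : q 0 ≤ aa i := le_trans hj2 (aa_mono hji)
        calc saw i t ≤ hh i / 2 := hst
          _ ≤ |mm i - q 0| := by rw [le_abs]; left; linarith [aa_le_mm i]
      · -- j = i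
        subst hji
        refine le_trans ?_ (abs1_le_dist (uu j t) q)
        rw [hu1, hj3]
        exact saw_le_tooth j t k
      · -- j > i : q 0 ≥ aa j ≥ aa (i+1) = mm i + hh i / 2
        refine le_trans ?_ (abs0_le_dist (uu i t) q)
        rw [hu0]
        have : aa (i+1) ≤ q 0 := le_trans (aa_mono hji) hj1
        calc saw i t ≤ hh i / 2 := hst
          _ ≤ |mm i - q 0| := by rw [le_abs]; right; simp; linarith [mm_le_aa i]


private lemma round_eq_k {x : ℝ} {k : ℤ} (h1 : (k:ℝ) - 1/2 ≤ x) (h2 : x < k + 1/2) :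
    round x = k := by
  rw [round_eq, Int.floor_eq_iff]
  constructor <;> push_cast <;> linarith

private lemma saw_eq_abs (i : ℕ) (k : ℤ) {t : ℝ} (h1 : k * hh i - hh i / 2 ≤ t)
    (h2 : t < k * hh i + hh i / 2) : saw i t = |t - k * hh i| := by
  have hp := hh_pos i
  have hr : round (t / hh i) = k := by
    apply round_eq_k
    · rw [le_div_iff₀ hp]; ring_nf; ring_nf at h1; linarith
    · rw [div_lt_iff₀ hp]; ring_nf; ring_nf at h2; linarith
  rw [saw, hr]

private lemma deriv_norm_one (i : ℕ) {t : ℝ} (ht : t ∈ Ioo (0:ℝ) 1)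
    (hg : ∀ k : ℤ, t ≠ k * (hh i / 2)) :
    ‖deriv (fun x => φ₀ (uu i x)) t‖ = 1 := by
  have hp := hh_pos i
  set k := round (t / hh i) with hk
  set c := (k:ℝ) * hh i with hc
  have hd2 : |t - c| ≤ hh i / 2 := by simpa [saw, hc, hk] using saw_le i t
  have hd2' := abs_le.1 hd2
  have hne : t ≠ c := fun h => hg (2*k) (by rw [h, hc]; push_cast; ring)
  have hne2 : t ≠ c + hh i / 2 := fun h => hg (2*k+1) (by rw [h, hc]; push_cast; ring)
  have hne3 : t ≠ c - hh i / 2 := fun h => hg (2*k-1) (by rw [h, hc]; push_cast; ring)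
  rcases lt_or_gt_of_ne hne with hlt | hgt
  · -- t < c : slope -1
    have hsub : t ∈ Ioo (max (c - hh i/2) 0) (min c 1) := by
      refine ⟨max_lt_iff.2 ⟨lt_of_le_of_ne (by linarith) (Ne.symm hne3), ht.1⟩,
        lt_min_iff.2 ⟨hlt, ht.2⟩⟩
    have hev : (fun x => φ₀ (uu i x)) =ᶠ[nhds t] fun x => c - x := by
      filter_upwards [isOpen_Ioo.mem_nhds hsub] with x hx
      obtain ⟨hx1, hx2⟩ := hx
      rw [max_lt_iff] at hx1; rw [lt_min_iff] at hx2
      have hxI : x ∈ Icc (0:ℝ) 1 := ⟨hx1.2.le, hx2.2.le⟩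
      rw [phi_uu i hxI, saw_eq_abs i k (by rw [← hc]; linarith) (by rw [← hc]; linarith),
        ← hc, abs_of_nonpos (by linarith)]
      ring
    have hD : HasDerivAt (fun x => φ₀ (uu i x)) (-1) t :=
      HasDerivAt.congr_of_eventuallyEq (by simpa using (hasDerivAt_id t).const_sub c) hev
    rw [hD.deriv]; norm_num
  · -- t > c : slope 1
    have hsub : t ∈ Ioo (max c 0) (min (c + hh i/2) 1) := by
      refine ⟨max_lt_iff.2 ⟨hgt, ht.1⟩,
        lt_min_iff.2 ⟨lt_of_le_of_ne (by linarith) hne2, ht.2⟩⟩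
    have hev : (fun x => φ₀ (uu i x)) =ᶠ[nhds t] fun x => x - c := by
      filter_upwards [isOpen_Ioo.mem_nhds hsub] with x hx
      obtain ⟨hx1, hx2⟩ := hx
      rw [max_lt_iff] at hx1; rw [lt_min_iff] at hx2
      have hxI : x ∈ Icc (0:ℝ) 1 := ⟨hx1.2.le, hx2.2.le⟩
      rw [phi_uu i hxI, saw_eq_abs i k (by rw [← hc]; linarith) (by rw [← hc]; linarith),
        ← hc, abs_of_nonneg (by linarith)]
    have hD : HasDerivAt (fun x => φ₀ (uu i x)) 1 t :=
      HasDerivAt.congr_of_eventuallyEq ((hasDerivAt_id t).sub_const c) hev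
    rw [hD.deriv]; norm_num


private lemma lip_affine (c : EuclideanSpace ℝ (Fin 2)) :
    LipschitzWith 1 (fun t : ℝ => c + t • ee) := by
  apply LipschitzWith.of_dist_le_mul
  intro s t
  have h1 : dist (c + s • ee) (c + t • ee) = ‖(s - t) • ee‖ := by
    rw [dist_eq_norm]
    congr 1
    rw [add_sub_add_left_eq_sub, ← sub_smul]
  have h2 : ‖ee‖ = 1 := by
    rw [ee, norm_pt]; norm_num
  rw [h1, norm_smul, h2, Real.dist_eq]
  simp [Real.norm_eq_abs]

private lemma hasDerivAt_curve (c : EuclideanSpace ℝ (Fin 2)) (t : ℝ) :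
    HasDerivAt (fun x : ℝ => c + x • ee) ee t := by
  simpa using ((hasDerivAt_id t).smul_const ee).const_add c

private lemma phi_vv (t : ℝ) : φ₀ (vv t) = 0 := by
  apply infDist_zero_of_mem
  rw [vv_eq]
  exact Or.inr (Or.inr (Or.inl rfl))

private lemma hcs_φ₀ : HasCompactSupport φ₀ := by
  apply HasCompactSupport.intro (isCompact_closedBall (0 : EuclideanSpace ℝ (Fin 2)) 100)
  intro z hz
  rw [Metric.mem_closedBall, dist_zero_right, not_le] at hz
  apply infDist_zero_of_mem
  by_cases h0 : 50 ≤ |z 0|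
  · exact Or.inl h0
  · by_cases h1 : 50 ≤ |z 1|
    · exact Or.inr (Or.inl h1)
    · exfalso
      push_neg at h0 h1
      have hn : ‖z‖ = Real.sqrt (z 0 ^ 2 + z 1 ^ 2) := by
        rw [EuclideanSpace.norm_eq, Fin.sum_univ_two]
        simp [sq_abs]
      have : ‖z‖ ≤ 100 := by
        rw [hn, show (100:ℝ) = Real.sqrt (100^2) from (Real.sqrt_sq (by norm_num)).symm]
        apply Real.sqrt_le_sqrt
        nlinarith [abs_nonneg (z 0), abs_nonneg (z 1), sq_abs (z 0), sq_abs (z 1)]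
      linarith

end
end Stmt5Aux

/-- **Theorem (discontinuity of the composition operator).** There is a compactly supported
Lipschitz function `φ : ℝ² → ℝ` such that for every `1 ≤ p < ∞` the composition operator
`u ↦ φ ∘ u` from `W^{1,p}([0,1], ℝ²)` to `W^{1,p}([0,1])` is not continuous: there are
Lipschitz curves `uᵢ → v` in `W^{1,p}([0,1], ℝ²)` for which `φ ∘ uᵢ` does not converge to
`φ ∘ v` in `W^{1,p}([0,1])`. -/
theorem stmt_5 : ∃ φ : EuclideanSpace ℝ (Fin 2) → ℝ,
    (∃ L : NNReal, LipschitzWith L φ) ∧ HasCompactSupport φ ∧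
    ∀ p : ENNReal, 1 ≤ p → p ≠ ⊤ →
      ∃ (u : ℕ → ℝ → EuclideanSpace ℝ (Fin 2)) (v : ℝ → EuclideanSpace ℝ (Fin 2)),
        (∀ i, ∃ K : NNReal, LipschitzWith K (u i)) ∧ (∃ K : NNReal, LipschitzWith K v) ∧
        Tendsto (fun i =>
            eLpNorm (fun x => u i x - v x) p (volume.restrict (Set.Icc (0:ℝ) 1)) +
            eLpNorm (fun x => deriv (u i) x - deriv v x) p
              (volume.restrict (Set.Icc (0:ℝ) 1)))
          atTop (nhds 0) ∧
        ¬ Tendsto (fun i =>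
            eLpNorm (fun x => φ (u i x) - φ (v x)) p (volume.restrict (Set.Icc (0:ℝ) 1)) +
            eLpNorm (fun x => deriv (φ ∘ u i) x - deriv (φ ∘ v) x) p
              (volume.restrict (Set.Icc (0:ℝ) 1)))
          atTop (nhds 0) := by
  classical
  refine ⟨φ₀, ⟨1, Metric.lipschitz_infDist_pt KK⟩, hcs_φ₀, ?_⟩
  intro p hp1 hptop
  have hp0 : p ≠ 0 := fun h => by rw [h] at hp1; exact (by norm_num : ¬ (1:ENNReal) ≤ 0) hp1
  set μ := volume.restrict (Set.Icc (0:ℝ) 1) with hμdef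
  have hμuniv : μ Set.univ = 1 := by
    rw [hμdef, Measure.restrict_apply_univ, Real.volume_Icc]; norm_num
  have hμ0 : μ ≠ 0 := by
    intro h; rw [h] at hμuniv; simp at hμuniv
  refine ⟨uu, vv, fun i => ⟨1, lip_affine _⟩, ⟨1, lip_affine _⟩, ?_, ?_⟩
  · -- convergence in W^{1,p}
    have hterm2 : ∀ i, eLpNorm (fun x => deriv (uu i) x - deriv vv x) p μ = 0 := by
      intro i
      have heq : (fun x : ℝ => deriv (uu i) x - deriv vv x) = fun _ => (0 : EuclideanSpace ℝ (Fin 2)) := by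
        funext x
        rw [show deriv (uu i) x = ee from (hasDerivAt_curve (pt (mm i) 0) x).deriv,
          show deriv vv x = ee from (hasDerivAt_curve (pt 2 0) x).deriv, sub_self]
      rw [heq]; exact eLpNorm_zero
    have hb : ∀ i, eLpNorm (fun x => uu i x - vv x) p μ ≤ ENNReal.ofReal (2 * hh i) := by
      intro i
      have hpos := hh_pos i
      have hbd : ∀ᵐ x ∂μ, ‖uu i x - vv x‖ ≤ 2 * hh i := by
        refine Filter.Eventually.of_forall fun x => ?_
        have hc : uu i x - vv x = pt (mm i - 2) 0 := by
          ext j; fin_cases j <;> simp [uu, vv, pt, ee]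
        rw [hc, norm_pt, show mm i - 2 = -((3/2) * hh i) by rw [mm]; ring]
        rw [show (-((3/2) * hh i))^2 + (0:ℝ)^2 = ((3/2) * hh i)^2 by ring,
          Real.sqrt_sq (by positivity)]
        linarith
      calc eLpNorm (fun x => uu i x - vv x) p μ
          ≤ μ Set.univ ^ p.toReal⁻¹ * ENNReal.ofReal (2 * hh i) := eLpNorm_le_of_ae_bound hbd
        _ = ENNReal.ofReal (2 * hh i) := by rw [hμuniv, ENNReal.one_rpow, one_mul]
    have hto : Tendsto (fun i => ENNReal.ofReal (2 * hh i)) atTop (nhds 0) := by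
      rw [show (0:ENNReal) = ENNReal.ofReal 0 by simp]
      apply ENNReal.tendsto_ofReal
      have h2 := tendsto_pow_atTop_nhds_zero_of_lt_one
        (by norm_num : (0:ℝ) ≤ 1/2) (by norm_num : (1/2:ℝ) < 1)
      have := h2.const_mul (2:ℝ)
      simpa [hh] using this
    refine tendsto_of_tendsto_of_tendsto_of_le_of_le tendsto_const_nhds hto
      (fun i => zero_le) (fun i => ?_)
    rw [hterm2 i, add_zero]; exact hb i
  · -- the composed sequence does not converge
    intro hcon
    have hone : ∀ i, (1:ENNReal) ≤
        eLpNorm (fun x => φ₀ (uu i x) - φ₀ (vv x)) p μ +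
        eLpNorm (fun x => deriv (φ₀ ∘ uu i) x - deriv (φ₀ ∘ vv) x) p μ := by
      intro i
      have hvv0 : (φ₀ ∘ vv) = fun _ => (0:ℝ) := funext fun t => phi_vv t
      have key : eLpNorm (fun x => deriv (φ₀ ∘ uu i) x - deriv (φ₀ ∘ vv) x) p μ = 1 := by
        have hcong : eLpNorm (fun x => deriv (φ₀ ∘ uu i) x - deriv (φ₀ ∘ vv) x) p μ
            = eLpNorm (fun _ : ℝ => (1:ℝ)) p μ := by
          apply eLpNorm_congr_norm_ae
          rw [hμdef, ae_restrict_iff' measurableSet_Icc]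
          have hN : volume ({(0:ℝ), 1} ∪ Set.range (fun k : ℤ => (k:ℝ) * (hh i / 2))) = 0 := by
            apply measure_union_null
            · exact Set.Countable.measure_zero (Set.to_countable _) _
            · exact Set.Countable.measure_zero (Set.countable_range _) _
          filter_upwards [measure_eq_zero_iff_ae_notMem.1 hN] with x hx hxI
          have hx0 : x ≠ 0 := fun h => hx (Or.inl (by simp [h]))
          have hx1 : x ≠ 1 := fun h => hx (Or.inl (by simp [h]))
          have hgrid : ∀ k : ℤ, x ≠ k * (hh i / 2) := fun k h => hx (Or.inr ⟨k, h.symm⟩)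
          have hIoo : x ∈ Ioo (0:ℝ) 1 :=
            ⟨lt_of_le_of_ne hxI.1 (Ne.symm hx0), lt_of_le_of_ne hxI.2 hx1⟩
          rw [hvv0, deriv_const, sub_zero,
            show (φ₀ ∘ uu i) = fun y => φ₀ (uu i y) from rfl,
            deriv_norm_one i hIoo hgrid]
          simp
        rw [hcong, eLpNorm_const _ hp0 hμ0, hμuniv, ENNReal.one_rpow, mul_one]
        simp
      calc (1:ENNReal) = _ := key.symm
        _ ≤ _ := le_add_self
    have hev : ∀ᶠ i in atTop,
        eLpNorm (fun x => φ₀ (uu i x) - φ₀ (vv x)) p μ +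
        eLpNorm (fun x => deriv (φ₀ ∘ uu i) x - deriv (φ₀ ∘ vv) x) p μ < 1 :=
      hcon (Iio_mem_nhds (by norm_num : (0:ENNReal) < 1))
    obtain ⟨i, hi⟩ := hev.exists
    exact absurd (hone i) (not_le.2 hi)
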